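/- Let K be a field and let s, t, a ∈ K with s ≠ 0. Define the linear map τ_a : K×K → K×K by τ_a(x,y) = ( a·y + (1 − a/s)·x , (a·t/s)·x + (1 − a·t)·y ). Then τ_a is bijective if and only if (st + 1)·a ≠ s. Consequently, if K is a finite field, s, t ∈ K^× with t ≠ s⁻¹ and {−1, s, t} generates K^×, then the number of bijective, left and right invertible maps τ : K×K → K×K such that (K, S_{s,t}, τ) is a singular pair is at most |K| − 1. -/

import Mathlib

namespace Paper

/-- The flip map on `X × X`. -/
def flipMap (X : Type*) : X × X → X × X := fun p => (p.2, p.1)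

/-- `F × id` acting on triples. -/
def onFst {X : Type*} (F : X × X → X × X) : X × X × X → X × X × X :=
  fun p => ((F (p.1, p.2.1)).1, (F (p.1, p.2.1)).2, p.2.2)

/-- `id × F` acting on triples. -/
def onSnd {X : Type*} (F : X × X → X × X) : X × X × X → X × X × X :=
  fun p => (p.1, F p.2)

/-- `F` is left invertible: for all `x z` there is a unique `y` with `F¹(x,y) = z`. -/
def LeftInvertible {X : Type*} (F : X × X → X × X) : Prop :=
  ∀ x z : X, ∃! y : X, (F (x, y)).1 = z

/-- `F` is right invertible: for all `y t` there is a unique `x` with `F²(x,y) = t`. -/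
def RightInvertible {X : Type*} (F : X × X → X × X) : Prop :=
  ∀ y t : X, ∃! x : X, (F (x, y)).2 = t

/-- Set-theoretic solution of the Yang–Baxter equation. -/
def IsYB {X : Type*} (S : X × X → X × X) : Prop :=
  Function.Bijective S ∧
    onSnd S ∘ onFst S ∘ onSnd S = onFst S ∘ onSnd S ∘ onFst S

/-- Biquandle: a left and right invertible YB solution together with a bijection
`s : X → X` parametrizing the fixed points of `S`. -/
def IsBiquandle {X : Type*} (S : X × X → X × X) : Prop :=
  IsYB S ∧ LeftInvertible S ∧ RightInvertible S ∧
    ∃ s : X → X, Function.Bijective s ∧ ∀ x y : X, S (x, y) = (x, y) ↔ y = s x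

/-- `(X, S, τ)` is a singular pair. -/
def IsSingularPair {X : Type*} (S τ : X × X → X × X) : Prop :=
  IsBiquandle S ∧ Function.Bijective τ ∧ LeftInvertible τ ∧ RightInvertible τ ∧
    τ ∘ S = S ∘ τ ∧
    onFst S ∘ onSnd S ∘ onFst τ = onSnd τ ∘ onFst S ∘ onSnd S ∧
    onSnd S ∘ onFst S ∘ onSnd τ = onFst τ ∘ onSnd S ∘ onFst S

/-- The bialexander switch `S_{s,t}(x,y) = (s•y, t•x + (1 - s*t)•y)`. -/
def bialexander {R : Type*} [CommRing R] {X : Type*} [AddCommGroup X] [Module R X]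
    (s t : R) : X × X → X × X :=
  fun p => (s • p.2, t • p.1 + (1 - s * t) • p.2)

theorem classification {K : Type*} [Field K] (s t : K) (hs : s ≠ 0) (ht : t ≠ 0)
    (hst : s * t ≠ 1)
    (hclo : Subgroup.closure {u : Kˣ | (u : K) = -1 ∨ (u : K) = s ∨ (u : K) = t} = ⊤)
    {τ : K × K → K × K} (hτ : IsSingularPair (bialexander (X := K) s t) τ) :
    ∃ a : K, a ≠ 0 ∧
      τ = fun p : K × K =>
        (a * p.2 + (1 - a / s) * p.1, (a * t / s) * p.1 + (1 - a * t) * p.2) := by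
  obtain ⟨-, -, hli, -, hcomm, h2, h3⟩ := hτ
  have hc : (1 : K) - s * t ≠ 0 := sub_ne_zero.mpr (Ne.symm hst)
  -- component equations from h3
  have E3 : ∀ x y z : K,
      s * (τ (y, z)).1 = (τ (s * y, s * z)).1 ∧
      t * (t * x + (1 - s*t) * (τ (y, z)).1) + (1 - s*t) * (τ (y, z)).2
        = t * (t * x + (1 - s*t) * y) + (1 - s*t) * z := by
    intro x y z
    have := congrFun h3 (x, y, z)
    simp only [onSnd, onFst, bialexander, Function.comp_apply, smul_eq_mul,
      Prod.mk.injEq] at this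
    exact ⟨this.1, this.2.2⟩
  -- from (3c): second component of τ in terms of first
  have hG : ∀ y z : K, (τ (y, z)).2 = t * y + z - t * (τ (y, z)).1 := by
    intro y z
    have h := (E3 0 y z).2
    have key : (1 - s*t) * (τ (y, z)).2 = (1 - s*t) * (t * y + z - t * (τ (y, z)).1) := by
      linear_combination h
    exact mul_left_cancel₀ hc key
  -- (2a): second component of h2
  have E2 : ∀ x y z : K,
      (τ (t * x + (1 - s*t) * (s * z), t * y + (1 - s*t) * z)).1
        = t * (τ (x, y)).1 + (1 - s*t) * (s * z) := by
    intro x y z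
    have h := congrFun h2 (x, y, z)
    simp only [onSnd, onFst, bialexander, Function.comp_apply, smul_eq_mul,
      Prod.mk.injEq] at h
    exact (congrArg Prod.fst h.2).symm
  -- t-scaling of first component
  have hT : ∀ x y : K, (τ (t * x, t * y)).1 = t * (τ (x, y)).1 := by
    intro x y
    have h := E2 x y 0
    simpa using h
  -- translation property
  have htr : ∀ u v w : K, (τ (u + s * w, v + w)).1 = (τ (u, v)).1 + s * w := by
    intro u v w
    have h := E2 (u / t) (v / t) (w / (1 - s*t))
    have e1 : t * (u / t) + (1 - s*t) * (s * (w / (1 - s*t))) = u + s * w := by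
      rw [mul_div_cancel₀ _ ht, mul_left_comm, mul_div_cancel₀ _ hc]
    have e2 : t * (v / t) + (1 - s*t) * (w / (1 - s*t)) = v + w := by
      rw [mul_div_cancel₀ _ ht, mul_div_cancel₀ _ hc]
    have e3 : t * (τ (u / t, v / t)).1 = (τ (u, v)).1 := by
      have h4 := hT (u / t) (v / t)
      rw [mul_div_cancel₀ _ ht, mul_div_cancel₀ _ ht] at h4
      exact h4.symm
    have e4 : (1 - s*t) * (s * (w / (1 - s*t))) = s * w := by
      field_simp
    rw [e1, e2, e3, e4] at h
    exact h
  -- commutation, first component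
  have hA : ∀ x y : K, (τ (s * y, t * x + (1 - s*t) * y)).1 = s * (τ (x, y)).2 := by
    intro x y
    have h := congrFun hcomm (x, y)
    simp only [bialexander, Function.comp_apply, smul_eq_mul, Prod.ext_iff] at h
    exact h.1
  set ψ : K → K := fun r => (τ (0, r)).1 with hψdef
  have hf : ∀ x y : K, (τ (x, y)).1 = x + ψ (y - x / s) := by
    intro x y
    have h := htr 0 (y - x / s) (x / s)
    rw [zero_add, mul_div_cancel₀ _ hs, sub_add_cancel] at h
    rw [h]; ring
  have hψs : ∀ r : K, ψ (s * r) = s * ψ r := by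
    intro r
    have h := (E3 0 0 r).1
    rw [mul_zero] at h
    exact h.symm
  have hψt : ∀ r : K, ψ (t * r) = t * ψ r := by
    intro r
    have h := hT 0 r
    rwa [mul_zero] at h
  have hψneg : ∀ r : K, ψ (-r) = -ψ r := by
    intro r
    have hsr : ψ (-(r / s)) = ψ (-r) / s := by
      have h1 := hψs (-(r / s))
      have e : s * -(r / s) = -r := by field_simp
      rw [e] at h1
      rw [eq_div_iff hs, mul_comm, ← h1]
    have h := hA r 0
    rw [mul_zero, mul_zero, add_zero] at h
    have hL : (τ ((0:K), t * r)).1 = ψ (t * r) := rfl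
    rw [hL, hψt, hG r 0, hf r 0, add_zero, zero_sub, hsr] at h
    have hc2 : s * (ψ (-r) / s) = ψ (-r) := mul_div_cancel₀ _ hs
    have key : t * ψ (-r) = t * -ψ r := by linear_combination h - t * hc2
    exact mul_left_cancel₀ ht key
  -- subgroup of units acting linearly on ψ
  have hunit : ∀ (u : Kˣ) (r : K), ψ ((u : K) * r) = (u : K) * ψ r := by
    have hmem : ∀ u : Kˣ, u ∈ Subgroup.closure
        {u : Kˣ | (u : K) = -1 ∨ (u : K) = s ∨ (u : K) = t} := by
      intro u; rw [hclo]; trivial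
    intro u
    refine Subgroup.closure_induction ?_ ?_ ?_ ?_ (hmem u)
    · rintro v (hv | hv | hv) r
      · rw [hv, neg_one_mul, hψneg, neg_one_mul]
      · rw [hv, hψs]
      · rw [hv, hψt]
    · intro r; rw [Units.val_one, one_mul, one_mul]
    · intro v w _ _ hv hw r
      rw [Units.val_mul, mul_assoc, hv, hw, mul_assoc]
    · intro v _ hv r
      have h1 := hv ((v⁻¹ : Kˣ) * r)
      rw [← mul_assoc, ← Units.val_mul, mul_inv_cancel, Units.val_one, one_mul] at h1
      rw [h1, ← mul_assoc, ← Units.val_mul, inv_mul_cancel, Units.val_one, one_mul]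
  have hψ0 : ψ 0 = 0 := by
    have h1 : ψ 0 = s * ψ 0 := by
      have := hψs 0; rw [mul_zero] at this; exact this
    have h2 : ψ 0 = t * ψ 0 := by
      have := hψt 0; rw [mul_zero] at this; exact this
    have h3 : (1 - s * t) * ψ 0 = 0 := by
      nth_rewrite 2 [h2] at h1
      linear_combination h1
    exact (mul_eq_zero.mp h3).resolve_left hc
  set a : K := ψ 1 with hadef
  have hlin : ∀ r : K, ψ r = a * r := by
    intro r
    rcases eq_or_ne r 0 with rfl | hr
    · rw [hψ0, mul_zero]
    · have h := hunit (Units.mk0 r hr) 1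
      rw [mul_one, Units.val_mk0] at h
      rw [h, hadef, mul_comm]
  have ha : a ≠ 0 := by
    intro h0
    obtain ⟨y₀, -, huniq⟩ := hli 0 0
    have h1 : (τ ((0:K), (0:K))).1 = 0 := hψ0
    have h2 : (τ ((0:K), (1:K))).1 = 0 := by
      have := hlin 1
      rw [h0, zero_mul] at this
      exact this
    have e0 := huniq 0 h1
    have e1 := huniq 1 h2
    exact one_ne_zero (α := K) (e1.trans e0.symm)
  refine ⟨a, ha, ?_⟩
  funext p
  obtain ⟨x, y⟩ := p
  show τ (x, y) = (a * y + (1 - a / s) * x, a * t / s * x + (1 - a * t) * y)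
  have h1 : (τ (x, y)).1 = a * y + (1 - a / s) * x := by
    rw [hf x y, hlin]
    field_simp
    ring
  have h2 : (τ (x, y)).2 = a * t / s * x + (1 - a * t) * y := by
    rw [hG x y, h1]
    field_simp
    ring
  exact Prod.ext h1 h2


/-- `τ_a` is bijective iff `(s*t + 1)*a ≠ s`; consequently, over a finite
field with `t ≠ s⁻¹` and `{-1,s,t}` generating `Kˣ`, there are at most `|K| - 1`
maps `τ` making `(K, S_{s,t}, τ)` a singular pair. -/
theorem tau_a_bijective_iff_and_card {K : Type*} [Field K] (s t a : K) (hs : s ≠ 0) :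
    (Function.Bijective
      (fun p : K × K =>
        (a * p.2 + (1 - a / s) * p.1, (a * t / s) * p.1 + (1 - a * t) * p.2)) ↔
      (s * t + 1) * a ≠ s) ∧
    (∀ (_ : Finite K), t ≠ 0 → t ≠ s⁻¹ →
      Subgroup.closure {u : Kˣ | (u : K) = -1 ∨ (u : K) = s ∨ (u : K) = t} = ⊤ →
      Set.ncard {τ : K × K → K × K | IsSingularPair (bialexander (X := K) s t) τ} ≤
        Nat.card K - 1) := by
  constructor
  · constructor
    · intro hbij hcontra
      have ha : a ≠ 0 := by
        rintro rfl
        simp at hcontra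
        exact hs hcontra.symm
      have hkey : (fun p : K × K =>
          (a * p.2 + (1 - a / s) * p.1, (a * t / s) * p.1 + (1 - a * t) * p.2))
            (a, a/s - 1) = (fun p : K × K =>
          (a * p.2 + (1 - a / s) * p.1, (a * t / s) * p.1 + (1 - a * t) * p.2)) (0, 0) := by
        simp only [Prod.mk.injEq]
        constructor
        · ring
        · field_simp
          linear_combination hcontra
      have := hbij.injective hkey
      rw [Prod.mk.injEq] at this
      exact ha this.1
    · intro hne
      have he : s - a * t * s - a ≠ 0 := by
        intro h
        exact hne (by linear_combination -h)
      rw [Function.bijective_iff_has_inverse]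
      refine ⟨fun p => (((s - a*t*s) * p.1 - s*a*p.2) / (s - a*t*s - a),
          (-(a*t) * p.1 + (s - a) * p.2) / (s - a*t*s - a)), ?_, ?_⟩
      · intro p
        simp only
        rw [Prod.ext_iff]
        constructor
        · simp only; field_simp; linear_combination p.1 * mul_inv_cancel₀ he
        · simp only; field_simp; linear_combination p.2 * s * mul_inv_cancel₀ he
      · intro p
        simp only
        rw [Prod.ext_iff]
        constructor
        · simp only; field_simp; linear_combination p.1 * mul_inv_cancel₀ he
        · simp only; field_simp; linear_combination p.2 * mul_inv_cancel₀ he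
  · intro _ ht hts hclo
    have hst : s * t ≠ 1 := by
      intro h
      apply hts
      field_simp
      linear_combination h
    have ht0 : t ≠ 0 := ht
    have hsub : {τ : K × K → K × K | IsSingularPair (bialexander (X := K) s t) τ} ⊆
        (fun a : K => fun p : K × K =>
          (a * p.2 + (1 - a / s) * p.1, (a * t / s) * p.1 + (1 - a * t) * p.2)) ''
          {a : K | a ≠ 0} := by
      intro τ hτ
      obtain ⟨b, hb, hbeq⟩ := classification s t hs ht0 hst hclo hτ
      exact ⟨b, hb, hbeq.symm⟩
    calc Set.ncard {τ : K × K → K × K | IsSingularPair (bialexander (X := K) s t) τ}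
        ≤ Set.ncard ((fun a : K => fun p : K × K =>
            (a * p.2 + (1 - a / s) * p.1, (a * t / s) * p.1 + (1 - a * t) * p.2)) ''
            {a : K | a ≠ 0}) := Set.ncard_le_ncard hsub (Set.toFinite _)
      _ ≤ Set.ncard {a : K | a ≠ 0} := Set.ncard_image_le (Set.toFinite _)
      _ = Nat.card K - 1 := by
          have huniv : {a : K | a ≠ 0} = (Set.univ : Set K) \ {0} := by ext; simp
          rw [huniv, Set.ncard_diff_singleton_of_mem (Set.mem_univ 0), Set.ncard_univ]

end Paper
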